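/- Let μ be a probability measure on ℝ that is absolutely continuous with respect to Lebesgue measure with a density bounded above by L > 0. Then for every probability measure ν on ℝ, the Kolmogorov distance satisfies K(μ, ν) ≤ √(2 · L · W(μ, ν)), where W is the 1-Wasserstein distance on ℝ with the Euclidean metric. -/

import Mathlib

open MeasureTheory ENNReal
open Set

/-- The set of couplings of two measures: measures on the product whose marginals
are the given measures. -/
def couplings {X Y : Type*} [MeasurableSpace X] [MeasurableSpace Y]
    (μ : Measure X) (ν : Measure Y) : Set (Measure (X × Y)) :=
  {γ | γ.map Prod.fst = μ ∧ γ.map Prod.snd = ν}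

/-- The 1-Wasserstein distance, valued in `[0,∞]`. -/
noncomputable def wassersteinDist {X : Type*} [MeasurableSpace X] [PseudoEMetricSpace X]
    (μ ν : Measure X) : ℝ≥0∞ :=
  ⨅ γ ∈ couplings μ ν, ∫⁻ p : X × X, edist p.1 p.2 ∂γ



lemma tonelli_right (γ : Measure (ℝ×ℝ)) [IsFiniteMeasure γ] (x : ℝ) :
    ∫⁻ t in Set.Ioi x, γ {p : ℝ × ℝ | p.2 ≤ x ∧ t < p.1} ≤ ∫⁻ p : ℝ × ℝ, edist p.1 p.2 ∂γ := by
  set S : Set (ℝ × (ℝ × ℝ)) := {q | q.2.2 ≤ x ∧ q.1 < q.2.1} with hS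
  have hSm : MeasurableSet S := by
    apply MeasurableSet.inter
    · exact measurableSet_Iic.preimage (measurable_snd.comp measurable_snd)
    · exact measurableSet_lt measurable_fst (measurable_fst.comp measurable_snd)
  have hmeas : ∀ t : ℝ, MeasurableSet {p : ℝ × ℝ | p.2 ≤ x ∧ t < p.1} := fun t =>
    (measurableSet_Iic.preimage measurable_snd).inter (measurableSet_Ioi.preimage measurable_fst)
  have h1 : ∀ t : ℝ, γ {p : ℝ × ℝ | p.2 ≤ x ∧ t < p.1}
      = ∫⁻ p, S.indicator 1 (t, p) ∂γ := by
    intro t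
    rw [show (fun p => S.indicator 1 (t, p)) = ({p : ℝ × ℝ | p.2 ≤ x ∧ t < p.1}).indicator 1 by
      ext p; by_cases h : p.2 ≤ x ∧ t < p.1 <;>
        simp [Set.indicator, hS, h]]
    exact (lintegral_indicator_one (hmeas t)).symm
  calc ∫⁻ t in Set.Ioi x, γ {p : ℝ × ℝ | p.2 ≤ x ∧ t < p.1}
      = ∫⁻ t in Set.Ioi x, ∫⁻ p, S.indicator 1 (t, p) ∂γ := by
        exact lintegral_congr h1
    _ = ∫⁻ p, (∫⁻ t in Set.Ioi x, S.indicator 1 (t, p)) ∂γ := by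
        apply lintegral_lintegral_swap
        exact ((measurable_const.indicator hSm).aemeasurable)
    _ ≤ ∫⁻ p : ℝ × ℝ, edist p.1 p.2 ∂γ := by
        apply lintegral_mono
        intro p
        show (∫⁻ t in Set.Ioi x, S.indicator 1 (t, p)) ≤ edist p.1 p.2
        by_cases h : p.2 ≤ x
        · have : (fun t => S.indicator 1 (t, p) : ℝ → ℝ≥0∞) = (Set.Iio p.1).indicator 1 := by
            ext t; by_cases ht : t < p.1 <;> simp [Set.indicator, hS, h, ht]
          rw [this, lintegral_indicator_one measurableSet_Iio, Measure.restrict_apply measurableSet_Iio]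
          have : Set.Iio p.1 ∩ Set.Ioi x = Set.Ioo x p.1 := by ext t; simp [and_comm]
          rw [this, Real.volume_Ioo, edist_dist, Real.dist_eq]
          apply ENNReal.ofReal_le_ofReal
          have : p.1 - p.2 ≤ |p.1 - p.2| := le_abs_self _
          linarith
        · have : (fun t => S.indicator 1 (t, p) : ℝ → ℝ≥0∞) = 0 := by
            ext t; simp [Set.indicator, hS, h]
          rw [this]
          exact le_trans (le_of_eq lintegral_zero) zero_le

lemma tonelli_left (γ : Measure (ℝ×ℝ)) [IsFiniteMeasure γ] (x : ℝ) :
    ∫⁻ t in Set.Iio x, γ {p : ℝ × ℝ | x < p.2 ∧ p.1 ≤ t} ≤ ∫⁻ p : ℝ × ℝ, edist p.1 p.2 ∂γ := by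
  set S : Set (ℝ × (ℝ × ℝ)) := {q | x < q.2.2 ∧ q.2.1 ≤ q.1} with hS
  have hSm : MeasurableSet S := by
    apply MeasurableSet.inter
    · exact measurableSet_Ioi.preimage (measurable_snd.comp measurable_snd)
    · exact measurableSet_le (measurable_fst.comp measurable_snd) measurable_fst
  have hmeas : ∀ t : ℝ, MeasurableSet {p : ℝ × ℝ | x < p.2 ∧ p.1 ≤ t} := fun t =>
    (measurableSet_Ioi.preimage measurable_snd).inter (measurableSet_Iic.preimage measurable_fst)
  have h1 : ∀ t : ℝ, γ {p : ℝ × ℝ | x < p.2 ∧ p.1 ≤ t}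
      = ∫⁻ p, S.indicator 1 (t, p) ∂γ := by
    intro t
    rw [show (fun p => S.indicator 1 (t, p)) = ({p : ℝ × ℝ | x < p.2 ∧ p.1 ≤ t}).indicator 1 by
      ext p; by_cases h : x < p.2 ∧ p.1 ≤ t <;>
        simp [Set.indicator, hS, h]]
    exact (lintegral_indicator_one (hmeas t)).symm
  calc ∫⁻ t in Set.Iio x, γ {p : ℝ × ℝ | x < p.2 ∧ p.1 ≤ t}
      = ∫⁻ t in Set.Iio x, ∫⁻ p, S.indicator 1 (t, p) ∂γ := by
        exact lintegral_congr h1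
    _ = ∫⁻ p, (∫⁻ t in Set.Iio x, S.indicator 1 (t, p)) ∂γ := by
        apply lintegral_lintegral_swap
        exact ((measurable_const.indicator hSm).aemeasurable)
    _ ≤ ∫⁻ p : ℝ × ℝ, edist p.1 p.2 ∂γ := by
        apply lintegral_mono
        intro p
        show (∫⁻ t in Set.Iio x, S.indicator 1 (t, p)) ≤ edist p.1 p.2
        by_cases h : x < p.2
        · have : (fun t => S.indicator 1 (t, p) : ℝ → ℝ≥0∞) = (Set.Ici p.1).indicator 1 := by
            ext t; by_cases ht : p.1 ≤ t <;> simp [Set.indicator, hS, h, ht]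
          rw [this, lintegral_indicator_one measurableSet_Ici, Measure.restrict_apply measurableSet_Ici]
          have : Set.Ici p.1 ∩ Set.Iio x = Set.Ico p.1 x := by ext t; simp [and_comm]
          rw [this, Real.volume_Ico, edist_dist, Real.dist_eq]
          apply ENNReal.ofReal_le_ofReal
          have : -(p.1 - p.2) ≤ |p.1 - p.2| := neg_le_abs _
          linarith
        · have : (fun t => S.indicator 1 (t, p) : ℝ → ℝ≥0∞) = 0 := by
            ext t; simp [Set.indicator, hS, h]
          rw [this]
          exact le_trans (le_of_eq lintegral_zero) zero_le

lemma density_bound (μ : Measure ℝ) [IsFiniteMeasure μ] (L : ℝ)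
    (hac : μ ≪ volume)
    (hdens : ∀ᵐ x ∂(volume : Measure ℝ), μ.rnDeriv volume x ≤ ENNReal.ofReal L)
    (s t : ℝ) :
    μ (Set.Ioc s t) ≤ ENNReal.ofReal L * ENNReal.ofReal (t - s) := by
  rw [← Measure.setLIntegral_rnDeriv hac]
  calc ∫⁻ y in Set.Ioc s t, μ.rnDeriv volume y ∂volume
      ≤ ∫⁻ _ in Set.Ioc s t, ENNReal.ofReal L ∂volume := by
        refine lintegral_mono_ae (ae_restrict_of_ae ?_)
        exact hdens
    _ = ENNReal.ofReal L * volume (Set.Ioc s t) := by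
        rw [setLIntegral_const]
    _ = ENNReal.ofReal L * ENNReal.ofReal (t - s) := by rw [Real.volume_Ioc]

lemma integral_wedge (ε L δ : ℝ) (hL : 0 < L) (hδ : δ = ε / L) (x : ℝ) :
    ∫ t in x..(x+δ), (ε - L*(t-x)) = ε^2/(2*L) := by
  have h1 : ∫ t in x..(x+δ), (t - x) = δ^2/2 := by
    rw [intervalIntegral.integral_comp_sub_right (fun s => s) x]
    simp [integral_id]
  rw [intervalIntegral.integral_sub intervalIntegrable_const
    ((by fun_prop : Continuous fun t : ℝ => L*(t-x)).intervalIntegrable _ _),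
    intervalIntegral.integral_const_mul, h1, intervalIntegral.integral_const]
  simp only [smul_eq_mul]
  rw [hδ]
  field_simp
  ring


lemma coupling_bound (μ ν : Measure ℝ) [IsProbabilityMeasure μ] [IsProbabilityMeasure ν]
    (L : ℝ) (hL : 0 < L) (hac : μ ≪ volume)
    (hdens : ∀ᵐ x ∂(volume : Measure ℝ), μ.rnDeriv volume x ≤ ENNReal.ofReal L)
    (γ : Measure (ℝ × ℝ)) (hγ : γ ∈ couplings μ ν) (x : ℝ) :
    ENNReal.ofReal (((μ (Set.Iic x)).toReal - (ν (Set.Iic x)).toReal)^2 / (2*L))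
      ≤ ∫⁻ p : ℝ × ℝ, edist p.1 p.2 ∂γ := by
  obtain ⟨hγ1, hγ2⟩ := hγ
  haveI : IsProbabilityMeasure γ := by
    constructor
    have h : (γ.map Prod.fst) Set.univ = 1 := by rw [hγ1]; exact measure_univ
    rwa [Measure.map_apply measurable_fst MeasurableSet.univ, Set.preimage_univ] at h
  set a := (μ (Set.Iic x)).toReal with ha
  set b := (ν (Set.Iic x)).toReal with hb
  have ha0 : 0 ≤ a := ENNReal.toReal_nonneg
  have hb0 : 0 ≤ b := ENNReal.toReal_nonneg
  have haE : μ (Set.Iic x) = ENNReal.ofReal a := (ENNReal.ofReal_toReal (measure_ne_top _ _)).symm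
  have hbE : ν (Set.Iic x) = ENNReal.ofReal b := (ENNReal.ofReal_toReal (measure_ne_top _ _)).symm
  have hμfst : ∀ t, γ {p : ℝ × ℝ | p.1 ≤ t} = μ (Set.Iic t) := fun t => by
    rw [← hγ1, Measure.map_apply measurable_fst measurableSet_Iic]; rfl
  have hνsnd : γ {p : ℝ × ℝ | p.2 ≤ x} = ν (Set.Iic x) := by
    rw [← hγ2, Measure.map_apply measurable_snd measurableSet_Iic]; rfl
  rcases le_total a b with hab | hab
  · -- case F_ν ≥ F_μ at x
    set ε := b - a with hε
    have hε0 : 0 ≤ ε := by linarith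
    set δ := ε / L with hδ
    have hδ0 : 0 ≤ δ := div_nonneg hε0 hL.le
    have hLδ : L * δ = ε := by rw [hδ, mul_comm, div_mul_cancel₀ _ hL.ne']
    have key : ∀ t ∈ Set.Ioc x (x+δ),
        ENNReal.ofReal (ε - L*(t-x)) ≤ γ {p : ℝ × ℝ | p.2 ≤ x ∧ t < p.1} := by
      intro t ht
      have hc0 : 0 ≤ a + L*(t-x) := by nlinarith [ht.1.le]
      have h1 : ν (Set.Iic x) ≤ γ {p : ℝ × ℝ | p.2 ≤ x ∧ t < p.1} + μ (Set.Iic t) := by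
        rw [← hνsnd, ← hμfst t]
        refine le_trans (measure_mono ?_) (measure_union_le _ _)
        intro p hp
        by_cases h : t < p.1
        · exact Or.inl ⟨hp, h⟩
        · exact Or.inr (le_of_not_gt h)
      have h2 : μ (Set.Iic t) ≤ ENNReal.ofReal (a + L*(t-x)) := by
        have hsub : Set.Iic t ⊆ Set.Iic x ∪ Set.Ioc x t := by
          intro y hy
          rcases le_or_gt y x with h | h
          · exact Or.inl h
          · exact Or.inr ⟨h, hy⟩
        calc μ (Set.Iic t) ≤ μ (Set.Iic x) + μ (Set.Ioc x t) :=
              le_trans (measure_mono hsub) (measure_union_le _ _)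
          _ ≤ ENNReal.ofReal a + ENNReal.ofReal L * ENNReal.ofReal (t - x) := by
              rw [haE]
              exact add_le_add_right (density_bound μ L hac hdens x t) _
          _ = ENNReal.ofReal (a + L*(t-x)) := by
              rw [← ENNReal.ofReal_mul hL.le, ← ENNReal.ofReal_add ha0
                (mul_nonneg hL.le (by linarith [ht.1.le]))]
      have h3 : ENNReal.ofReal b ≤ γ {p : ℝ × ℝ | p.2 ≤ x ∧ t < p.1}
          + ENNReal.ofReal (a + L*(t-x)) := by
        rw [← hbE]
        exact le_trans h1 (add_le_add_right h2 _)
      calc ENNReal.ofReal (ε - L*(t-x))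
          = ENNReal.ofReal (b - (a + L*(t-x))) := by rw [hε]; ring_nf
        _ = ENNReal.ofReal b - ENNReal.ofReal (a + L*(t-x)) := ENNReal.ofReal_sub _ hc0
        _ ≤ γ {p : ℝ × ℝ | p.2 ≤ x ∧ t < p.1} := tsub_le_iff_right.mpr h3
    have hnn : ∀ t ∈ Set.Ioc x (x+δ), 0 ≤ ε - L*(t-x) := by
      intro t ht
      have : L*(t-x) ≤ L*δ := mul_le_mul_of_nonneg_left (by linarith [ht.2]) hL.le
      linarith [hLδ]
    have hcalc : ENNReal.ofReal (ε^2/(2*L))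
        = ∫⁻ t in Set.Ioc x (x+δ), ENNReal.ofReal (ε - L*(t-x)) := by
      rw [← integral_wedge ε L δ hL hδ x,
        intervalIntegral.integral_of_le (by linarith : x ≤ x + δ)]
      refine ofReal_integral_eq_lintegral_ofReal ?_ ?_
      · exact ((by fun_prop : Continuous fun t : ℝ => ε - L*(t-x)).integrableOn_Ioc)
      · exact (ae_restrict_iff' measurableSet_Ioc).2 (ae_of_all _ hnn)
    calc ENNReal.ofReal ((a - b)^2 / (2*L))
        = ENNReal.ofReal (ε^2/(2*L)) := by rw [show (a-b)^2 = ε^2 by rw [hε]; ring]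
      _ = ∫⁻ t in Set.Ioc x (x+δ), ENNReal.ofReal (ε - L*(t-x)) := hcalc
      _ ≤ ∫⁻ t in Set.Ioc x (x+δ), γ {p : ℝ × ℝ | p.2 ≤ x ∧ t < p.1} :=
          lintegral_mono_ae ((ae_restrict_iff' measurableSet_Ioc).2 (ae_of_all _ key))
      _ ≤ ∫⁻ t in Set.Ioi x, γ {p : ℝ × ℝ | p.2 ≤ x ∧ t < p.1} :=
          lintegral_mono_set Set.Ioc_subset_Ioi_self
      _ ≤ ∫⁻ p : ℝ × ℝ, edist p.1 p.2 ∂γ := tonelli_right γ x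
  · -- case F_μ ≥ F_ν at x
    set ε := a - b with hε
    have hε0 : 0 ≤ ε := by linarith
    set δ := ε / L with hδ
    have hδ0 : 0 ≤ δ := div_nonneg hε0 hL.le
    have hLδ : L * δ = ε := by rw [hδ, mul_comm, div_mul_cancel₀ _ hL.ne']
    have key : ∀ t ∈ Set.Ioo (x-δ) x,
        ENNReal.ofReal (ε - L*(x-t)) ≤ γ {p : ℝ × ℝ | x < p.2 ∧ p.1 ≤ t} := by
      intro t ht
      have hc0 : 0 ≤ b + L*(x-t) := by nlinarith [ht.2.le]
      have h1 : μ (Set.Iic t) ≤ γ {p : ℝ × ℝ | x < p.2 ∧ p.1 ≤ t} + ν (Set.Iic x) := by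
        rw [← hνsnd, ← hμfst t]
        refine le_trans (measure_mono ?_) (measure_union_le _ _)
        intro p hp
        by_cases h : x < p.2
        · exact Or.inl ⟨h, hp⟩
        · exact Or.inr (le_of_not_gt h)
      have h2 : μ (Set.Iic x) ≤ μ (Set.Iic t) + ENNReal.ofReal (L*(x-t)) := by
        have hsub : Set.Iic x ⊆ Set.Iic t ∪ Set.Ioc t x := by
          intro y hy
          rcases le_or_gt y t with h | h
          · exact Or.inl h
          · exact Or.inr ⟨h, hy⟩
        calc μ (Set.Iic x) ≤ μ (Set.Iic t) + μ (Set.Ioc t x) :=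
              le_trans (measure_mono hsub) (measure_union_le _ _)
          _ ≤ μ (Set.Iic t) + ENNReal.ofReal (L*(x-t)) := by
              refine add_le_add_right ?_ _
              rw [ENNReal.ofReal_mul hL.le]
              exact density_bound μ L hac hdens t x
      have h3 : ENNReal.ofReal a ≤ γ {p : ℝ × ℝ | x < p.2 ∧ p.1 ≤ t}
          + ENNReal.ofReal (b + L*(x-t)) := by
        rw [← haE]
        calc μ (Set.Iic x) ≤ μ (Set.Iic t) + ENNReal.ofReal (L*(x-t)) := h2
          _ ≤ (γ {p : ℝ × ℝ | x < p.2 ∧ p.1 ≤ t} + ν (Set.Iic x)) + ENNReal.ofReal (L*(x-t)) :=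
              add_le_add_left h1 _
          _ = γ {p : ℝ × ℝ | x < p.2 ∧ p.1 ≤ t} + (ENNReal.ofReal b + ENNReal.ofReal (L*(x-t))) := by
              rw [hbE, add_assoc]
          _ = γ {p : ℝ × ℝ | x < p.2 ∧ p.1 ≤ t} + ENNReal.ofReal (b + L*(x-t)) := by
              rw [← ENNReal.ofReal_add hb0 (mul_nonneg hL.le (by linarith [ht.2.le]))]
      calc ENNReal.ofReal (ε - L*(x-t))
          = ENNReal.ofReal (a - (b + L*(x-t))) := by rw [hε]; ring_nf
        _ = ENNReal.ofReal a - ENNReal.ofReal (b + L*(x-t)) := ENNReal.ofReal_sub _ hc0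
        _ ≤ γ {p : ℝ × ℝ | x < p.2 ∧ p.1 ≤ t} := tsub_le_iff_right.mpr h3
    have hnn : ∀ t ∈ Set.Ioc (x-δ) x, 0 ≤ ε - L*(x-t) := by
      intro t ht
      have : L*(x-t) ≤ L*δ := mul_le_mul_of_nonneg_left (by linarith [ht.1.le]) hL.le
      linarith [hLδ]
    have hint : ∫ t in (x-δ)..x, (ε - L*(x-t)) = ε^2/(2*L) := by
      have h1 : ∫ t in (x-δ)..x, (x - t) = δ^2/2 := by
        rw [intervalIntegral.integral_comp_sub_left (fun s => s) x]
        simp [integral_id]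
      rw [intervalIntegral.integral_sub intervalIntegrable_const
        ((by fun_prop : Continuous fun t : ℝ => L*(x-t)).intervalIntegrable _ _),
        intervalIntegral.integral_const_mul, h1, intervalIntegral.integral_const]
      simp only [smul_eq_mul]
      rw [hδ]
      field_simp
      ring
    have hcalc : ENNReal.ofReal (ε^2/(2*L))
        = ∫⁻ t in Set.Ioo (x-δ) x, ENNReal.ofReal (ε - L*(x-t)) := by
      rw [Measure.restrict_congr_set Ioo_ae_eq_Ioc,
        ← hint, intervalIntegral.integral_of_le (by linarith : x - δ ≤ x)]
      refine ofReal_integral_eq_lintegral_ofReal ?_ ?_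
      · exact ((by fun_prop : Continuous fun t : ℝ => ε - L*(x-t)).integrableOn_Ioc)
      · exact (ae_restrict_iff' measurableSet_Ioc).2 (ae_of_all _ hnn)
    calc ENNReal.ofReal ((a - b)^2 / (2*L))
        = ENNReal.ofReal (ε^2/(2*L)) := by rw [show (a-b)^2 = ε^2 by rw [hε]]
      _ = ∫⁻ t in Set.Ioo (x-δ) x, ENNReal.ofReal (ε - L*(x-t)) := hcalc
      _ ≤ ∫⁻ t in Set.Ioo (x-δ) x, γ {p : ℝ × ℝ | x < p.2 ∧ p.1 ≤ t} :=
          lintegral_mono_ae ((ae_restrict_iff' measurableSet_Ioo).2 (ae_of_all _ key))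
      _ ≤ ∫⁻ t in Set.Iio x, γ {p : ℝ × ℝ | x < p.2 ∧ p.1 ≤ t} :=
          lintegral_mono_set Set.Ioo_subset_Iio_self
      _ ≤ ∫⁻ p : ℝ × ℝ, edist p.1 p.2 ∂γ := tonelli_left γ x

/-- If `μ` is a probability measure on `ℝ` absolutely continuous w.r.t. Lebesgue measure
with density bounded above by `L > 0`, then for any probability measure `ν` on `ℝ`, the
Kolmogorov distance satisfies `K(μ,ν) ≤ √(2 · L · W(μ,ν))`. -/
theorem kolmogorov_le_sqrt_wasserstein
    (μ ν : Measure ℝ) [IsProbabilityMeasure μ] [IsProbabilityMeasure ν]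
    (L : ℝ) (hL : 0 < L)
    (hac : μ ≪ volume)
    (hdens : ∀ᵐ x ∂(volume : Measure ℝ), μ.rnDeriv volume x ≤ ENNReal.ofReal L) :
    ENNReal.ofReal (⨆ x : ℝ, |(μ (Set.Iic x)).toReal - (ν (Set.Iic x)).toReal|)
      ≤ (2 * ENNReal.ofReal L * wassersteinDist μ ν) ^ (1/2 : ℝ) := by
  set c : ℝ≥0∞ := 2 * ENNReal.ofReal L * wassersteinDist μ ν with hc
  set f : ℝ → ℝ := fun x => |(μ (Set.Iic x)).toReal - (ν (Set.Iic x)).toReal| with hf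
  have hf0 : ∀ x, 0 ≤ f x := fun x => abs_nonneg _
  -- pointwise bound
  have hpt : ∀ x : ℝ, ENNReal.ofReal (f x) ≤ c ^ (1/2 : ℝ) := by
    intro x
    have hW : ENNReal.ofReal (f x ^ 2 / (2*L)) ≤ wassersteinDist μ ν := by
      refine le_iInf fun γ => le_iInf fun hγ => ?_
      have := coupling_bound μ ν L hL hac hdens γ hγ x
      rwa [show ((μ (Set.Iic x)).toReal - (ν (Set.Iic x)).toReal)^2 = f x ^ 2 by
        rw [hf]; exact (sq_abs _).symm] at this
    have hsq : ENNReal.ofReal (f x) ^ (2:ℝ) ≤ c := by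
      have h1 : ENNReal.ofReal (f x) ^ (2:ℝ) = ENNReal.ofReal (f x ^ 2) := by
        rw [show (2:ℝ) = ((2:ℕ):ℝ) by norm_num, ENNReal.rpow_natCast,
          ← ENNReal.ofReal_pow (hf0 x)]
      rw [h1, show f x ^ 2 = (2*L) * (f x ^ 2 / (2*L)) by field_simp,
        ENNReal.ofReal_mul (by linarith)]
      calc ENNReal.ofReal (2*L) * ENNReal.ofReal (f x ^ 2 / (2*L))
          ≤ ENNReal.ofReal (2*L) * wassersteinDist μ ν :=
            mul_le_mul_right hW _
        _ = c := by rw [hc, ENNReal.ofReal_mul (by norm_num), ENNReal.ofReal_ofNat]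
    calc ENNReal.ofReal (f x) = (ENNReal.ofReal (f x) ^ (2:ℝ)) ^ (1/2:ℝ) := by
          rw [← ENNReal.rpow_mul]; norm_num
      _ ≤ c ^ (1/2:ℝ) := ENNReal.rpow_le_rpow hsq (by norm_num)
  -- sup step
  by_cases hct : c ^ (1/2:ℝ) = ⊤
  · rw [hct]; exact le_top
  · have hb : ∀ x, f x ≤ (c ^ (1/2:ℝ)).toReal := fun x =>
      (ENNReal.ofReal_le_iff_le_toReal hct).1 (hpt x)
    have hsup : (⨆ x : ℝ, f x) ≤ (c ^ (1/2:ℝ)).toReal := ciSup_le hb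
    calc ENNReal.ofReal (⨆ x : ℝ, f x) ≤ ENNReal.ofReal ((c ^ (1/2:ℝ)).toReal) :=
          ENNReal.ofReal_le_ofReal hsup
      _ = c ^ (1/2:ℝ) := ENNReal.ofReal_toReal hct
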